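/- With Ω₁^π, Ω₂^π the 1-forms of Theorem 2 and π the Kirillov–Kostant bivector on g*, the following identities hold for y₁, y₂ ∈ g: Ω₁^π([π,e^{y₁}], e^{y₂}) = ⟨[y₁, ω₁(y₁,y₂)], ∂_{y₁}⟩(e^{y₁}) ⊗ e^{y₂} + tr_g( ad(y₁) ∂_{y₁}ω₁(y₁,y₂) ) e^{y₁} ⊗ e^{y₂}, and Ω₂^π(e^{y₁}, [π,e^{y₂}]) = e^{y₁} ⊗ ⟨[y₂, ω₂(y₁,y₂)], ∂_{y₂}⟩(e^{y₂}) + tr_g( ad(y₂) ∂_{y₂}ω₂(y₁,y₂) ) e^{y₁} ⊗ e^{y₂}, where (ω₁, ω₂) is the Alekseev–Torossian connection. -/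

import Mathlib

/-!
# Statement 12 (`Ω_i^π` applied to Hamiltonian vector fields of exponentials)

With `Ω₁^π, Ω₂^π` the `1`-forms of Theorem 2 and `π` the Kirillov–Kostant bivector on
`g*`, the following identities hold for `y₁, y₂ ∈ g`:

`Ω₁^π([π,e^{y₁}], e^{y₂}) = ⟨[y₁, ω₁(y₁,y₂)], ∂_{y₁}⟩(e^{y₁}) ⊗ e^{y₂}
                          + tr_g(ad(y₁) ∂_{y₁}ω₁(y₁,y₂)) e^{y₁} ⊗ e^{y₂}`,
`Ω₂^π(e^{y₁}, [π,e^{y₂}]) = e^{y₁} ⊗ ⟨[y₂, ω₂(y₁,y₂)], ∂_{y₂}⟩(e^{y₂})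
                          + tr_g(ad(y₂) ∂_{y₂}ω₂(y₁,y₂)) e^{y₁} ⊗ e^{y₂}`,

where `(ω₁, ω₂)` is the Alekseev–Torossian connection (its symbol relation to
`Ω₁^π, Ω₂^π`, i.e. statement 11, is the hypothesis `hsymb`).

Modelling: everything is written as an identity of formal generating series in the big
power series ring with four blocks of variables: `x¹, x²` (the coordinates on `X = g*`
of the two tensor slots of `Ŝ(g) ⊗̂ Ŝ(g)`) and `y₁, y₂` (the formal arguments of the
exponentials), i.e. `MvPowerSeries Var4 K` with
`Var4 = (Fin d ⊕ Fin d) ⊕ (Fin d ⊕ Fin d)`.  The factor `e^{y₁} ⊗ e^{y₂}` is the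
series `EE = exp(Σᵢ x¹ᵢ y₁ᵢ + Σᵢ x²ᵢ y₂ᵢ)`.  One has
`[π,e^{y₁}]_i = Σ_{j,k} c j i k x¹_k y₁_j e^{y₁}` and
`∂^{m}(x_k e^{y}) = (x_k y^m + m_k y^{m−e_k}) e^{y}`, which gives the closed form
`hamExpTerm` for the application of the operator part `∂^{m₁} ⊗ ∂^{m₂}` of `Ω₁^π` to
`([π,e^{y₁}], e^{y₂})`; `⟨v,∂_{y₁}⟩e^{y₁} = (Σ_q x¹_q v_q)e^{y₁}`, and
`tr_g(ad(y₁)∂_{y₁}ω₁)` is computed with the formal partial derivatives `pdBig` in the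
`y₁`-variables.  All identities are stated coefficientwise (`∀ M`), which makes every
sum finitely supported.
-/

/-- Four blocks of formal variables: `x¹, x²` (inl) and `y₁, y₂` (inr). -/
abbrev Var4 (d : ℕ) := (Fin d ⊕ Fin d) ⊕ (Fin d ⊕ Fin d)

def xv1 {d : ℕ} (i : Fin d) : Var4 d := Sum.inl (Sum.inl i)
def xv2 {d : ℕ} (i : Fin d) : Var4 d := Sum.inl (Sum.inr i)
def yv1 {d : ℕ} (i : Fin d) : Var4 d := Sum.inr (Sum.inl i)
def yv2 {d : ℕ} (i : Fin d) : Var4 d := Sum.inr (Sum.inr i)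

/-- Formal exponential of a multivariate power series (coefficientwise finite formula;
it is the exponential when the constant term of `f` vanishes). -/
noncomputable def formalExp {σ K : Type*} [Field K] (f : MvPowerSeries σ K) :
    MvPowerSeries σ K :=
  fun M => ∑ n ∈ Finset.range (M.sum (fun _ k => k) + 1),
    (n.factorial : K)⁻¹ * MvPowerSeries.coeff M (f ^ n)

/-- Formal partial derivative `∂/∂X_v` of a multivariate power series. -/
noncomputable def pdBig {σ K : Type*} [Field K] (v : σ) (f : MvPowerSeries σ K) :
    MvPowerSeries σ K :=
  fun M => ((M v + 1 : ℕ) : K) * MvPowerSeries.coeff (M + Finsupp.single v 1) f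

/-- Embedding of a series in the variables `(y₁, y₂)` into the big ring. -/
noncomputable def embY {K : Type*} [Field K] {d : ℕ}
    (f : MvPowerSeries (Fin d ⊕ Fin d) K) : MvPowerSeries (Var4 d) K := by
  classical
  exact fun M =>
    if (∀ v : Fin d ⊕ Fin d, M (Sum.inl v) = 0) then
      f (Finsupp.comapDomain Sum.inr M (Sum.inr_injective.injOn)) else 0

/-- The monomial `y₁^m`, resp. `y₂^m`. -/
noncomputable def Ymon1 {K : Type*} [Field K] {d : ℕ} (m : Fin d →₀ ℕ) :
    MvPowerSeries (Var4 d) K :=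
  MvPowerSeries.monomial (Finsupp.mapDomain (fun i : Fin d => yv1 i) m) 1

noncomputable def Ymon2 {K : Type*} [Field K] {d : ℕ} (m : Fin d →₀ ℕ) :
    MvPowerSeries (Var4 d) K :=
  MvPowerSeries.monomial (Finsupp.mapDomain (fun i : Fin d => yv2 i) m) 1

/-- `e^{y₁} ⊗ e^{y₂} = exp(Σᵢ x¹ᵢ y₁ᵢ + Σᵢ x²ᵢ y₂ᵢ)`. -/
noncomputable def EE (K : Type*) [Field K] (d : ℕ) : MvPowerSeries (Var4 d) K :=
  formalExp (∑ i, MvPowerSeries.X (xv1 i) * MvPowerSeries.X (yv1 i) +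
             ∑ i, MvPowerSeries.X (xv2 i) * MvPowerSeries.X (yv2 i))

/-- The multi-exponent `(m₁, m₂)` as a multi-exponent in the `y`-variables. -/
noncomputable def joinMM {d : ℕ} (mm : (Fin d →₀ ℕ) × (Fin d →₀ ℕ)) :
    (Fin d ⊕ Fin d) →₀ ℕ :=
  mm.1.mapDomain Sum.inl + mm.2.mapDomain Sum.inr

section Aux

open MvPowerSeries Finsupp Finset

section prelim
variable {K : Type*} [Field K] {d : ℕ}

/-- comap of map along inr -/
lemma comap_map_inr (w : (Fin d ⊕ Fin d) →₀ ℕ) :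
    Finsupp.comapDomain (Sum.inr : (Fin d ⊕ Fin d) → Var4 d)
      (Finsupp.mapDomain Sum.inr w) (Sum.inr_injective.injOn) = w := by
  ext v
  rw [Finsupp.comapDomain_apply, Finsupp.mapDomain_apply Sum.inr_injective]

lemma map_inr_inl_eq_zero (w : (Fin d ⊕ Fin d) →₀ ℕ) (v : Fin d ⊕ Fin d) :
    Finsupp.mapDomain (Sum.inr : (Fin d ⊕ Fin d) → Var4 d) w (Sum.inl v) = 0 := by
  apply Finsupp.mapDomain_notin_range
  rintro ⟨u, h⟩
  exact Sum.inr_ne_inl h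

lemma coeff_embY (f : MvPowerSeries (Fin d ⊕ Fin d) K) (N : Var4 d →₀ ℕ) :
    MvPowerSeries.coeff N (embY f) =
      if h : (∀ v : Fin d ⊕ Fin d, N (Sum.inl v) = 0) then
        MvPowerSeries.coeff (Finsupp.comapDomain Sum.inr N (Sum.inr_injective.injOn)) f
      else 0 := rfl

lemma coeff_embY_map_inr (f : MvPowerSeries (Fin d ⊕ Fin d) K)
    (w : (Fin d ⊕ Fin d) →₀ ℕ) :
    MvPowerSeries.coeff (Finsupp.mapDomain Sum.inr w) (embY f) =
      MvPowerSeries.coeff w f := by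
  rw [coeff_embY, dif_pos]
  · rw [comap_map_inr]
  · exact map_inr_inl_eq_zero w

lemma coeff_embY_ne (f : MvPowerSeries (Fin d ⊕ Fin d) K) (N : Var4 d →₀ ℕ)
    (h : ¬ (∀ v : Fin d ⊕ Fin d, N (Sum.inl v) = 0)) :
    MvPowerSeries.coeff N (embY f) = 0 := by
  rw [coeff_embY, dif_neg h]

lemma coeff_pdBig (v : Var4 d) (f : MvPowerSeries (Var4 d) K) (N : Var4 d →₀ ℕ) :
    MvPowerSeries.coeff N (pdBig v f) =
      ((N v + 1 : ℕ) : K) * MvPowerSeries.coeff (N + Finsupp.single v 1) f := rfl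

lemma coeff_X_mul' (v : Var4 d) (f : MvPowerSeries (Var4 d) K) (N : Var4 d →₀ ℕ) :
    MvPowerSeries.coeff N (X v * f) =
      if Finsupp.single v 1 ≤ N then
        MvPowerSeries.coeff (N - Finsupp.single v 1) f else 0 := by
  rw [X_def, coeff_monomial_mul]
  split <;> simp

lemma coeff_XX_mul (v w : Var4 d) (f : MvPowerSeries (Var4 d) K) (N : Var4 d →₀ ℕ) :
    MvPowerSeries.coeff N (X v * (X w * f)) =
      if Finsupp.single v 1 + Finsupp.single w 1 ≤ N then
        MvPowerSeries.coeff (N - (Finsupp.single v 1 + Finsupp.single w 1)) f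
      else 0 := by
  rw [← mul_assoc, X_def, X_def, monomial_mul_monomial, coeff_monomial_mul]
  split <;> simp

end prelim

section core
variable {K : Type*} [Field K] {d : ℕ}
  (c : Fin d → Fin d → Fin d → K)
  (ω : Fin d → MvPowerSeries (Fin d ⊕ Fin d) K)
  (xa ya ys : Fin d → Var4 d)

/-- combined exponent of active/spectator parts -/
noncomputable def jnn (ya ys : Fin d → Var4 d) (a s : Fin d →₀ ℕ) : Var4 d →₀ ℕ :=
  Finsupp.mapDomain ya a + Finsupp.mapDomain ys s

variable (pr : (Fin d →₀ ℕ) → (Fin d →₀ ℕ) → (Fin d →₀ ℕ) × (Fin d →₀ ℕ))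
  (HJ : ∀ a s, Finsupp.mapDomain (Sum.inr : (Fin d ⊕ Fin d) → Var4 d)
      (joinMM (pr a s)) = jnn ya ys a s)
  (Happa : ∀ a s q, jnn ya ys a s (ya q) = a q)
  (Happs : ∀ a s q, jnn ya ys a s (ys q) = s q)
  (Hrec : ∀ N : Var4 d →₀ ℕ, (∀ v, N (Sum.inl v) = 0) →
      ∃ a s, N = jnn ya ys a s)
  (Hyx : ∀ (k : Fin d) (v : Fin d ⊕ Fin d), ya k ≠ Sum.inl v)

set_option linter.unusedSectionVars false

section withN
variable (N : Var4 d →₀ ℕ) (M : Var4 d →₀ ℕ)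

/-- the truncation finset -/
noncomputable def TT (ya ys : Fin d → Var4 d) (M : Var4 d →₀ ℕ) :
    Finset ((Fin d →₀ ℕ) × (Fin d →₀ ℕ)) :=
  Finset.Iic (Finsupp.equivFunOnFinite.symm fun i => M (ya i) + 1) ×ˢ
  Finset.Iic (Finsupp.equivFunOnFinite.symm fun i => M (ys i) + 1)

lemma mem_TT {ms : (Fin d →₀ ℕ) × (Fin d →₀ ℕ)} :
    ms ∈ TT ya ys M ↔ (∀ q, ms.1 q ≤ M (ya q) + 1) ∧ (∀ q, ms.2 q ≤ M (ys q) + 1) := by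
  simp only [TT, Finset.mem_product, Finset.mem_Iic, Finsupp.le_def,
    Finsupp.equivFunOnFinite_symm_apply_apply]

include HJ in
lemma jn_inl_eq_zero (a s : Fin d →₀ ℕ) (v : Fin d ⊕ Fin d) :
    jnn ya ys a s (Sum.inl v) = 0 := by
  rw [← HJ]; exact map_inr_inl_eq_zero _ v

include HJ in
lemma coeff_embY_jn (a s : Fin d →₀ ℕ) (i : Fin d) :
    MvPowerSeries.coeff (jnn ya ys a s) (embY (ω i)) =
      MvPowerSeries.coeff (joinMM (pr a s)) (ω i) := by
  rw [← HJ, coeff_embY_map_inr]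

include Happa Happs in
lemma jn_ext {a s a' s' : Fin d →₀ ℕ} (h : jnn ya ys a s = jnn ya ys a' s') :
    a = a' ∧ s = s' := by
  constructor
  · ext q; rw [← Happa a s q, h, Happa]
  · ext q; rw [← Happs a s q, h, Happs]

include HJ Happa Happs Hrec in
/-- `S1`: the active part of the truncated sum against the double-`X` indicator -/
lemma S1 (hN : N ≤ M) (i j k : Fin d) :
    (∑ ms ∈ TT ya ys M, MvPowerSeries.coeff (joinMM (pr ms.1 ms.2)) (ω i) *
        (if N = Finsupp.single (ya j) 1 + Finsupp.single (xa k) 1 +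
            jnn ya ys ms.1 ms.2 then (1:K) else 0))
      = MvPowerSeries.coeff N (MvPowerSeries.X (xa k) *
          (MvPowerSeries.X (ya j) * embY (ω i))) := by
  classical
  set s2 : Var4 d →₀ ℕ := Finsupp.single (ya j) 1 + Finsupp.single (xa k) 1 with hs2
  have hs2' : Finsupp.single (xa k) 1 + Finsupp.single (ya j) 1 = s2 := by
    rw [hs2, add_comm]
  rw [coeff_XX_mul, hs2']
  by_cases hle : s2 ≤ N
  · rw [if_pos hle]
    by_cases h0 : ∀ v, (N - s2) (Sum.inl v) = 0
    · obtain ⟨a0, s0, hrec⟩ := Hrec _ h0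
      rw [Finset.sum_eq_single (a0, s0)]
      · rw [if_pos, mul_one, hrec, coeff_embY_jn ω ya ys pr HJ]
        rw [← hrec]
        exact (add_tsub_cancel_of_le hle).symm.trans (by rw [add_comm])
      · intro ms _ hne
        rw [if_neg, mul_zero]
        intro hEq
        apply hne
        have : jnn ya ys ms.1 ms.2 = jnn ya ys a0 s0 := by
          rw [← hrec, hEq, add_tsub_cancel_left]
        obtain ⟨h1, h2⟩ := jn_ext ya ys Happa Happs this
        exact Prod.ext h1 h2
      · intro hnot
        exfalso; apply hnot
        rw [mem_TT]
        constructor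
        · intro q
          have : a0 q = (N - s2) (ya q) := by rw [hrec, Happa]
          rw [this, Finsupp.tsub_apply]
          exact le_trans (tsub_le_self) (le_trans (hN (ya q)) (Nat.le_succ _))
        · intro q
          have : s0 q = (N - s2) (ys q) := by rw [hrec, Happs]
          rw [this, Finsupp.tsub_apply]
          exact le_trans (tsub_le_self) (le_trans (hN (ys q)) (Nat.le_succ _))
    · rw [coeff_embY_ne _ _ h0]
      apply Finset.sum_eq_zero
      intro ms _
      rw [if_neg, mul_zero]
      intro hEq
      apply h0
      intro v
      rw [hEq, add_tsub_cancel_left]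
      exact jn_inl_eq_zero ya ys pr HJ _ _ v
  · rw [if_neg hle]
    apply Finset.sum_eq_zero
    intro ms _
    rw [if_neg, mul_zero]
    intro hEq
    exact hle (hEq ▸ le_add_right le_rfl)


include HJ Happa Happs Hrec Hyx in
/-- `S2`: the active part of the truncated sum against the derivative indicator -/
lemma S2 (hN : N ≤ M) (i j k : Fin d) :
    (∑ ms ∈ TT ya ys M, MvPowerSeries.coeff (joinMM (pr ms.1 ms.2)) (ω i) *
        ((ms.1 k : ℕ) : K) *
        (if N = Finsupp.single (ya j) 1 +
            jnn ya ys (ms.1 - Finsupp.single k 1) ms.2 then (1:K) else 0))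
      = MvPowerSeries.coeff N (MvPowerSeries.X (ya j) *
          pdBig (ya k) (embY (ω i))) := by
  classical
  rw [coeff_X_mul']
  by_cases hle : Finsupp.single (ya j) 1 ≤ N
  · rw [if_pos hle]
    set N2 : Var4 d →₀ ℕ := N - Finsupp.single (ya j) 1 with hN2
    rw [coeff_pdBig]
    by_cases h0 : ∀ v, N2 (Sum.inl v) = 0
    · obtain ⟨a0, s0, hrec⟩ := Hrec _ h0
      have hsub : (a0 + Finsupp.single k 1) - Finsupp.single k 1 = a0 :=
        add_tsub_cancel_right _ _
      have hexp : N2 + Finsupp.single (ya k) 1 = jnn ya ys (a0 + Finsupp.single k 1) s0 := by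
        rw [hrec]
        simp only [jnn, Finsupp.mapDomain_add, Finsupp.mapDomain_single]
        abel
      rw [Finset.sum_eq_single (a0 + Finsupp.single k 1, s0)]
      · rw [if_pos, mul_one]
        · have hval : N2 (ya k) = a0 k := by rw [hrec, Happa]
          rw [hexp, coeff_embY_jn ω ya ys pr HJ, hval]
          push_cast [Finsupp.add_apply, Finsupp.single_eq_same]
          ring
        · show N = _ + jnn ya ys ((a0 + Finsupp.single k 1) - Finsupp.single k 1) s0
          rw [hsub, ← hrec, add_comm]
          exact (tsub_add_cancel_of_le hle).symm
      · intro ms _ hne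
        by_cases hz : ms.1 k = 0
        · rw [hz]; push_cast; rw [mul_zero, zero_mul]
        · rw [if_neg, mul_zero]
          intro hEq
          apply hne
          have h1 : jnn ya ys (ms.1 - Finsupp.single k 1) ms.2 = jnn ya ys a0 s0 := by
            rw [← hrec, hN2, hEq, add_tsub_cancel_left]
          obtain ⟨ha, hs⟩ := jn_ext ya ys Happa Happs h1
          have hge : Finsupp.single k 1 ≤ ms.1 := by
            rw [Finsupp.le_def]
            intro q
            rcases eq_or_ne q k with rfl | hqk
            · rw [Finsupp.single_eq_same]; omega
            · rw [Finsupp.single_eq_of_ne hqk]; omega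
          have : ms.1 = a0 + Finsupp.single k 1 := by
            rw [← ha, tsub_add_cancel_of_le hge]
          exact Prod.ext this hs
      · intro hnot
        exfalso; apply hnot
        rw [mem_TT]
        constructor
        · intro q
          have ha0 : a0 q = N2 (ya q) := by rw [hrec, Happa]
          have h1 : N2 (ya q) ≤ M (ya q) := by
            rw [hN2, Finsupp.tsub_apply]
            exact le_trans tsub_le_self (hN (ya q))
          rcases eq_or_ne q k with rfl | hqk
          · rw [Finsupp.add_apply, Finsupp.single_eq_same, ha0]; omega
          · rw [Finsupp.add_apply, Finsupp.single_eq_of_ne hqk, ha0]; omega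
        · intro q
          have hs0 : s0 q = N2 (ys q) := by rw [hrec, Happs]
          have h1 : N2 (ys q) ≤ M (ys q) := by
            rw [hN2, Finsupp.tsub_apply]
            exact le_trans tsub_le_self (hN (ys q))
          show s0 q ≤ M (ys q) + 1
          omega
    · have hne0 : ¬ (∀ v : Fin d ⊕ Fin d, ((N2 + Finsupp.single (ya k) 1 : Var4 d →₀ ℕ)) (Sum.inl v) = 0) := by
        intro hco
        apply h0
        intro v
        have := hco v
        rwa [Finsupp.add_apply, Finsupp.single_eq_of_ne (Hyx k v).symm,
          add_zero] at this
      rw [coeff_embY_ne _ _ hne0, mul_zero]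
      apply Finset.sum_eq_zero
      intro ms _
      rw [if_neg, mul_zero]
      intro hEq
      apply h0
      intro v
      rw [hN2, hEq, add_tsub_cancel_left]
      exact jn_inl_eq_zero ya ys pr HJ _ _ v
  · rw [if_neg hle]
    apply Finset.sum_eq_zero
    intro ms _
    rw [if_neg, mul_zero]
    intro hEq
    exact hle (hEq ▸ le_add_right le_rfl)

omit [Field K] in
lemma sum_swap3 {M' : Type*} [AddCommMonoid M'] (f : Fin d → Fin d → Fin d → M') :
    ∑ a, ∑ b, ∑ e, f a b e = ∑ e, ∑ b, ∑ a, f a b e := by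
  calc ∑ a, ∑ b, ∑ e, f a b e
      = ∑ a, ∑ e, ∑ b, f a b e := Finset.sum_congr rfl fun _ _ => Finset.sum_comm
    _ = ∑ e, ∑ a, ∑ b, f a b e := Finset.sum_comm
    _ = ∑ e, ∑ b, ∑ a, f a b e := Finset.sum_congr rfl fun _ _ => Finset.sum_comm

omit [Field K] in
lemma sum_cycle3 {M' : Type*} [AddCommMonoid M'] (f : Fin d → Fin d → Fin d → M') :
    ∑ a, ∑ b, ∑ e, f a b e = ∑ b, ∑ e, ∑ a, f a b e := by
  calc ∑ a, ∑ b, ∑ e, f a b e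
      = ∑ b, ∑ a, ∑ e, f a b e := Finset.sum_comm
    _ = ∑ b, ∑ e, ∑ a, f a b e := Finset.sum_congr rfl fun _ _ => Finset.sum_comm

lemma expand_term (j k : Fin d) (A A' S : Var4 d →₀ ℕ) (r : K) :
    (MvPowerSeries.X (ya j) * (MvPowerSeries.X (xa k) * MvPowerSeries.monomial A (1:K) +
        r • MvPowerSeries.monomial A' (1:K))) * MvPowerSeries.monomial S 1
    = MvPowerSeries.monomial (Finsupp.single (ya j) 1 + Finsupp.single (xa k) 1 + (A + S)) (1:K)
      + r • MvPowerSeries.monomial (Finsupp.single (ya j) 1 + (A' + S)) (1:K) := by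
  rw [X_def, X_def, mul_add, add_mul, mul_smul_comm, smul_mul_assoc]
  simp only [monomial_mul_monomial, one_mul, mul_one]
  rw [show Finsupp.single (ya j) 1 + (Finsupp.single (xa k) 1 + A) + S =
      Finsupp.single (ya j) 1 + Finsupp.single (xa k) 1 + (A + S) by abel,
    show Finsupp.single (ya j) 1 + A' + S = Finsupp.single (ya j) 1 + (A' + S) by abel]

/-- the series applied by the symbol, coefficient of the statement's LHS -/
noncomputable def Qs (c : Fin d → Fin d → Fin d → K) (xa ya ys : Fin d → Var4 d)
    (ms : (Fin d →₀ ℕ) × (Fin d →₀ ℕ)) (i : Fin d) : MvPowerSeries (Var4 d) K :=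
  (∑ j, ∑ k, c j i k • (MvPowerSeries.X (ya j) *
      (MvPowerSeries.X (xa k) * MvPowerSeries.monomial (Finsupp.mapDomain ya ms.1) 1 +
        ((ms.1 k : ℕ) : K) •
          MvPowerSeries.monomial (Finsupp.mapDomain ya (ms.1 - Finsupp.single k 1)) 1))) *
    MvPowerSeries.monomial (Finsupp.mapDomain ys ms.2) 1

lemma coeffQ (ms : (Fin d →₀ ℕ) × (Fin d →₀ ℕ)) (i : Fin d) (N : Var4 d →₀ ℕ) :
    MvPowerSeries.coeff N (Qs c xa ya ys ms i) =
      ∑ j, ∑ k, c j i k *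
        ((if N = Finsupp.single (ya j) 1 + Finsupp.single (xa k) 1 +
            jnn ya ys ms.1 ms.2 then (1:K) else 0) +
         ((ms.1 k : ℕ) : K) *
          (if N = Finsupp.single (ya j) 1 +
            jnn ya ys (ms.1 - Finsupp.single k 1) ms.2 then (1:K) else 0)) := by
  classical
  rw [Qs]
  simp only [Finset.sum_mul, smul_mul_assoc, expand_term xa ya]
  simp only [jnn, map_sum, map_smul, map_add, smul_eq_mul, MvPowerSeries.coeff_monomial,
    mul_one, mul_add]
  convert rfl
  all_goals congr!

include Happa Happs in
lemma vanish (N : Var4 d →₀ ℕ) (hN : N ≤ M) (ms : (Fin d →₀ ℕ) × (Fin d →₀ ℕ))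
    (hms : ms ∉ TT ya ys M) (i : Fin d) :
    MvPowerSeries.coeff N (Qs c xa ya ys ms i) = 0 := by
  classical
  rw [coeffQ]
  refine Finset.sum_eq_zero fun j _ => Finset.sum_eq_zero fun k _ => ?_
  have hmem1 : N = Finsupp.single (ya j) 1 + Finsupp.single (xa k) 1 +
      jnn ya ys ms.1 ms.2 → ms ∈ TT ya ys M := by
    intro hEq
    rw [mem_TT]
    constructor
    · intro q
      have e1 : ms.1 q = jnn ya ys ms.1 ms.2 (ya q) := (Happa _ _ q).symm
      have e2 : jnn ya ys ms.1 ms.2 (ya q) ≤ N (ya q) := by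
        rw [hEq]; simp [Finsupp.add_apply]
      have e3 := hN (ya q)
      omega
    · intro q
      have e1 : ms.2 q = jnn ya ys ms.1 ms.2 (ys q) := (Happs _ _ q).symm
      have e2 : jnn ya ys ms.1 ms.2 (ys q) ≤ N (ys q) := by
        rw [hEq]; simp [Finsupp.add_apply]
      have e3 := hN (ys q)
      omega
  have hmem2 : ms.1 k ≠ 0 → N = Finsupp.single (ya j) 1 +
      jnn ya ys (ms.1 - Finsupp.single k 1) ms.2 → ms ∈ TT ya ys M := by
    intro hz hEq
    rw [mem_TT]
    constructor
    · intro q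
      have e1 : (ms.1 - Finsupp.single k 1 : Fin d →₀ ℕ) q =
          jnn ya ys (ms.1 - Finsupp.single k 1) ms.2 (ya q) := (Happa _ _ q).symm
      have e2 : jnn ya ys (ms.1 - Finsupp.single k 1) ms.2 (ya q) ≤ N (ya q) := by
        rw [hEq]; simp [Finsupp.add_apply]
      have e3 := hN (ya q)
      have e4 : (ms.1 - Finsupp.single k 1 : Fin d →₀ ℕ) q =
          ms.1 q - (Finsupp.single k 1 : Fin d →₀ ℕ) q := Finsupp.tsub_apply _ _ _
      rcases eq_or_ne k q with rfl | hkq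
      · rw [Finsupp.single_eq_same] at e4; omega
      · rw [Finsupp.single_eq_of_ne hkq.symm] at e4; omega
    · intro q
      have e1 : ms.2 q =
          jnn ya ys (ms.1 - Finsupp.single k 1) ms.2 (ys q) := (Happs _ _ q).symm
      have e2 : jnn ya ys (ms.1 - Finsupp.single k 1) ms.2 (ys q) ≤ N (ys q) := by
        rw [hEq]; simp [Finsupp.add_apply]
      have e3 := hN (ys q)
      omega
  by_cases hz : ms.1 k = 0
  · rw [if_neg (fun h => hms (hmem1 h)), hz]
    push_cast
    ring
  · rw [if_neg (fun h => hms (hmem1 h)), if_neg (fun h => hms (hmem2 hz h))]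
    ring

lemma keyB (N : Var4 d →₀ ℕ) :
    MvPowerSeries.coeff N
      ((∑ q, MvPowerSeries.X (xa q) *
          (∑ i, ∑ j, c i j q • (MvPowerSeries.X (ya i) * embY (ω j)))) +
        (∑ a, ∑ e, (∑ i, c i e a • MvPowerSeries.X (ya i)) *
          pdBig (ya a) (embY (ω e))))
    = ∑ i, ∑ j, ∑ k, c j i k *
        (MvPowerSeries.coeff N (MvPowerSeries.X (xa k) *
            (MvPowerSeries.X (ya j) * embY (ω i))) +
         MvPowerSeries.coeff N (MvPowerSeries.X (ya j) *
            pdBig (ya k) (embY (ω i)))) := by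
  classical
  rw [map_add]
  have hB1 : MvPowerSeries.coeff N
      (∑ q, MvPowerSeries.X (xa q) *
          (∑ i, ∑ j, c i j q • (MvPowerSeries.X (ya i) * embY (ω j))))
      = ∑ q, ∑ i, ∑ j, c i j q *
          MvPowerSeries.coeff N (MvPowerSeries.X (xa q) *
            (MvPowerSeries.X (ya i) * embY (ω j))) := by
    simp only [Finset.mul_sum, mul_smul_comm, map_sum, map_smul, smul_eq_mul]
  have hB2 : MvPowerSeries.coeff N
      (∑ a, ∑ e, (∑ i, c i e a • MvPowerSeries.X (ya i)) *
          pdBig (ya a) (embY (ω e)))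
      = ∑ a, ∑ e, ∑ i, c i e a *
          MvPowerSeries.coeff N (MvPowerSeries.X (ya i) *
            pdBig (ya a) (embY (ω e))) := by
    simp only [Finset.sum_mul, smul_mul_assoc, map_sum, map_smul, smul_eq_mul]
  rw [hB1, hB2]
  rw [sum_swap3 (f := fun q i j => c i j q *
      MvPowerSeries.coeff N (MvPowerSeries.X (xa q) *
        (MvPowerSeries.X (ya i) * embY (ω j))))]
  rw [sum_cycle3 (f := fun a e i => c i e a *
      MvPowerSeries.coeff N (MvPowerSeries.X (ya i) *
        pdBig (ya a) (embY (ω e))))]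
  rw [← Finset.sum_add_distrib]
  refine Finset.sum_congr rfl fun i _ => ?_
  rw [← Finset.sum_add_distrib]
  refine Finset.sum_congr rfl fun j _ => ?_
  rw [← Finset.sum_add_distrib]
  refine Finset.sum_congr rfl fun k _ => ?_
  ring

include HJ Happa Happs Hrec Hyx in
lemma key (hN : N ≤ M) :
    (∑ ms ∈ TT ya ys M, ∑ i,
        MvPowerSeries.coeff (joinMM (pr ms.1 ms.2)) (ω i) *
          MvPowerSeries.coeff N (Qs c xa ya ys ms i))
    = MvPowerSeries.coeff N
        ((∑ q, MvPowerSeries.X (xa q) *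
            (∑ i, ∑ j, c i j q • (MvPowerSeries.X (ya i) * embY (ω j)))) +
          (∑ a, ∑ e, (∑ i, c i e a • MvPowerSeries.X (ya i)) *
            pdBig (ya a) (embY (ω e)))) := by
  classical
  rw [keyB, Finset.sum_comm]
  refine Finset.sum_congr rfl fun i _ => ?_
  calc ∑ ms ∈ TT ya ys M,
        MvPowerSeries.coeff (joinMM (pr ms.1 ms.2)) (ω i) *
          MvPowerSeries.coeff N (Qs c xa ya ys ms i)
      = ∑ ms ∈ TT ya ys M, ∑ j, ∑ k,
          MvPowerSeries.coeff (joinMM (pr ms.1 ms.2)) (ω i) *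
            (c j i k *
              ((if N = Finsupp.single (ya j) 1 + Finsupp.single (xa k) 1 +
                  jnn ya ys ms.1 ms.2 then (1:K) else 0) +
               ((ms.1 k : ℕ) : K) *
                (if N = Finsupp.single (ya j) 1 +
                  jnn ya ys (ms.1 - Finsupp.single k 1) ms.2 then (1:K) else 0))) := by
        refine Finset.sum_congr rfl fun ms _ => ?_
        rw [coeffQ]
        simp only [Finset.mul_sum]
    _ = ∑ j, ∑ k, ∑ ms ∈ TT ya ys M,
          MvPowerSeries.coeff (joinMM (pr ms.1 ms.2)) (ω i) *
            (c j i k *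
              ((if N = Finsupp.single (ya j) 1 + Finsupp.single (xa k) 1 +
                  jnn ya ys ms.1 ms.2 then (1:K) else 0) +
               ((ms.1 k : ℕ) : K) *
                (if N = Finsupp.single (ya j) 1 +
                  jnn ya ys (ms.1 - Finsupp.single k 1) ms.2 then (1:K) else 0))) := by
        rw [Finset.sum_comm]
        exact Finset.sum_congr rfl fun j _ => Finset.sum_comm
    _ = ∑ j, ∑ k, c j i k *
          ((∑ ms ∈ TT ya ys M,
              MvPowerSeries.coeff (joinMM (pr ms.1 ms.2)) (ω i) *
                (if N = Finsupp.single (ya j) 1 + Finsupp.single (xa k) 1 +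
                  jnn ya ys ms.1 ms.2 then (1:K) else 0)) +
           (∑ ms ∈ TT ya ys M,
              MvPowerSeries.coeff (joinMM (pr ms.1 ms.2)) (ω i) *
                ((ms.1 k : ℕ) : K) *
                (if N = Finsupp.single (ya j) 1 +
                  jnn ya ys (ms.1 - Finsupp.single k 1) ms.2 then (1:K) else 0))) := by
        refine Finset.sum_congr rfl fun j _ => Finset.sum_congr rfl fun k _ => ?_
        have h1 : ∀ ms ∈ TT ya ys M,
            MvPowerSeries.coeff (joinMM (pr ms.1 ms.2)) (ω i) *
              (c j i k *
                ((if N = Finsupp.single (ya j) 1 + Finsupp.single (xa k) 1 +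
                    jnn ya ys ms.1 ms.2 then (1:K) else 0) +
                 ((ms.1 k : ℕ) : K) *
                  (if N = Finsupp.single (ya j) 1 +
                    jnn ya ys (ms.1 - Finsupp.single k 1) ms.2 then (1:K) else 0)))
            = c j i k *
                (MvPowerSeries.coeff (joinMM (pr ms.1 ms.2)) (ω i) *
                  (if N = Finsupp.single (ya j) 1 + Finsupp.single (xa k) 1 +
                    jnn ya ys ms.1 ms.2 then (1:K) else 0)) +
              c j i k *
                (MvPowerSeries.coeff (joinMM (pr ms.1 ms.2)) (ω i) *
                  ((ms.1 k : ℕ) : K) *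
                  (if N = Finsupp.single (ya j) 1 +
                    jnn ya ys (ms.1 - Finsupp.single k 1) ms.2 then (1:K) else 0)) :=
          fun ms _ => by ring
        rw [Finset.sum_congr rfl h1, Finset.sum_add_distrib, ← Finset.mul_sum,
          ← Finset.mul_sum, ← mul_add]
    _ = ∑ j, ∑ k, c j i k *
          (MvPowerSeries.coeff N (MvPowerSeries.X (xa k) *
              (MvPowerSeries.X (ya j) * embY (ω i))) +
           MvPowerSeries.coeff N (MvPowerSeries.X (ya j) *
              pdBig (ya k) (embY (ω i)))) := by
        refine Finset.sum_congr rfl fun j _ => Finset.sum_congr rfl fun k _ => ?_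
        rw [S1 ω xa ya ys pr HJ Happa Happs Hrec N M hN i j k,
          S2 ω ya ys pr HJ Happa Happs Hrec Hyx N M hN i j k]

end withN

include HJ Happa Happs Hrec Hyx in
theorem core_thm (E : MvPowerSeries (Var4 d) K) (M : Var4 d →₀ ℕ) :
    (∑ᶠ ms : (Fin d →₀ ℕ) × (Fin d →₀ ℕ), ∑ i,
        MvPowerSeries.coeff (joinMM (pr ms.1 ms.2)) (ω i) *
          MvPowerSeries.coeff M (Qs c xa ya ys ms i * E))
    = MvPowerSeries.coeff M
        (((∑ q, MvPowerSeries.X (xa q) *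
            (∑ i, ∑ j, c i j q • (MvPowerSeries.X (ya i) * embY (ω j)))) +
          (∑ a, ∑ e, (∑ i, c i e a • MvPowerSeries.X (ya i)) *
            pdBig (ya a) (embY (ω e)))) * E) := by
  classical
  have hF : ∀ ms : (Fin d →₀ ℕ) × (Fin d →₀ ℕ),
      (∑ i, MvPowerSeries.coeff (joinMM (pr ms.1 ms.2)) (ω i) *
          MvPowerSeries.coeff M (Qs c xa ya ys ms i * E))
      = ∑ p ∈ Finset.HasAntidiagonal.antidiagonal M,
          (∑ i, MvPowerSeries.coeff (joinMM (pr ms.1 ms.2)) (ω i) *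
            MvPowerSeries.coeff p.1 (Qs c xa ya ys ms i)) *
          MvPowerSeries.coeff p.2 E := by
    intro ms
    calc ∑ i, MvPowerSeries.coeff (joinMM (pr ms.1 ms.2)) (ω i) *
          MvPowerSeries.coeff M (Qs c xa ya ys ms i * E)
        = ∑ i, ∑ p ∈ Finset.HasAntidiagonal.antidiagonal M,
            MvPowerSeries.coeff (joinMM (pr ms.1 ms.2)) (ω i) *
              (MvPowerSeries.coeff p.1 (Qs c xa ya ys ms i) *
                MvPowerSeries.coeff p.2 E) := by
          simp only [MvPowerSeries.coeff_mul, Finset.mul_sum]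
      _ = ∑ p ∈ Finset.HasAntidiagonal.antidiagonal M, ∑ i,
            MvPowerSeries.coeff (joinMM (pr ms.1 ms.2)) (ω i) *
              (MvPowerSeries.coeff p.1 (Qs c xa ya ys ms i) *
                MvPowerSeries.coeff p.2 E) := Finset.sum_comm
      _ = ∑ p ∈ Finset.HasAntidiagonal.antidiagonal M,
            (∑ i, MvPowerSeries.coeff (joinMM (pr ms.1 ms.2)) (ω i) *
              MvPowerSeries.coeff p.1 (Qs c xa ya ys ms i)) *
            MvPowerSeries.coeff p.2 E := by
          refine Finset.sum_congr rfl fun p _ => ?_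
          rw [Finset.sum_mul]
          exact Finset.sum_congr rfl fun i _ => (mul_assoc _ _ _).symm
  have hple : ∀ p ∈ Finset.HasAntidiagonal.antidiagonal M, p.1 ≤ M := fun p hp => by
    rw [Finset.HasAntidiagonal.mem_antidiagonal] at hp
    exact le_of_le_of_eq le_self_add hp
  have hsupp : Function.support (fun ms : (Fin d →₀ ℕ) × (Fin d →₀ ℕ) =>
      ∑ i, MvPowerSeries.coeff (joinMM (pr ms.1 ms.2)) (ω i) *
        MvPowerSeries.coeff M (Qs c xa ya ys ms i * E)) ⊆ ↑(TT ya ys M) := by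
    intro ms hms
    by_contra hnot
    apply hms
    show (∑ i, MvPowerSeries.coeff (joinMM (pr ms.1 ms.2)) (ω i) *
        MvPowerSeries.coeff M (Qs c xa ya ys ms i * E)) = 0
    rw [hF ms]
    refine Finset.sum_eq_zero fun p hp => ?_
    have h0 : ∀ i, MvPowerSeries.coeff p.1 (Qs c xa ya ys ms i) = 0 := fun i =>
      vanish c xa ya ys Happa Happs M p.1 (hple p hp) ms (by simpa using hnot) i
    simp [h0]
  rw [finsum_eq_sum_of_support_subset _ hsupp]
  calc ∑ ms ∈ TT ya ys M,
        ∑ i, MvPowerSeries.coeff (joinMM (pr ms.1 ms.2)) (ω i) *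
          MvPowerSeries.coeff M (Qs c xa ya ys ms i * E)
      = ∑ ms ∈ TT ya ys M, ∑ p ∈ Finset.HasAntidiagonal.antidiagonal M,
          (∑ i, MvPowerSeries.coeff (joinMM (pr ms.1 ms.2)) (ω i) *
            MvPowerSeries.coeff p.1 (Qs c xa ya ys ms i)) *
          MvPowerSeries.coeff p.2 E := Finset.sum_congr rfl fun ms _ => hF ms
    _ = ∑ p ∈ Finset.HasAntidiagonal.antidiagonal M, ∑ ms ∈ TT ya ys M,
          (∑ i, MvPowerSeries.coeff (joinMM (pr ms.1 ms.2)) (ω i) *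
            MvPowerSeries.coeff p.1 (Qs c xa ya ys ms i)) *
          MvPowerSeries.coeff p.2 E := Finset.sum_comm
    _ = ∑ p ∈ Finset.HasAntidiagonal.antidiagonal M,
          (∑ ms ∈ TT ya ys M, ∑ i,
            MvPowerSeries.coeff (joinMM (pr ms.1 ms.2)) (ω i) *
              MvPowerSeries.coeff p.1 (Qs c xa ya ys ms i)) *
          MvPowerSeries.coeff p.2 E := by
        refine Finset.sum_congr rfl fun p _ => ?_
        rw [Finset.sum_mul]
    _ = ∑ p ∈ Finset.HasAntidiagonal.antidiagonal M,
          MvPowerSeries.coeff p.1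
            ((∑ q, MvPowerSeries.X (xa q) *
              (∑ i, ∑ j, c i j q • (MvPowerSeries.X (ya i) * embY (ω j)))) +
             (∑ a, ∑ e, (∑ i, c i e a • MvPowerSeries.X (ya i)) *
              pdBig (ya a) (embY (ω e)))) *
          MvPowerSeries.coeff p.2 E := by
        refine Finset.sum_congr rfl fun p hp => ?_
        rw [key c ω xa ya ys pr HJ Happa Happs Hrec Hyx p.1 M (hple p hp)]
    _ = _ := (MvPowerSeries.coeff_mul _ _ _).symm
end core


section inst
variable {d : ℕ}

lemma yv1_inj : Function.Injective (yv1 (d := d)) := by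
  intro a b h
  simpa [yv1] using h

lemma yv2_inj : Function.Injective (yv2 (d := d)) := by
  intro a b h
  simpa [yv2] using h

lemma yv1_notin_yv2 (q : Fin d) : yv1 q ∉ Set.range (yv2 (d := d)) := by
  rintro ⟨u, hu⟩
  simp [yv1, yv2] at hu

lemma yv2_notin_yv1 (q : Fin d) : yv2 q ∉ Set.range (yv1 (d := d)) := by
  rintro ⟨u, hu⟩
  simp [yv1, yv2] at hu

lemma HJ1 : ∀ a s : Fin d →₀ ℕ,
    Finsupp.mapDomain (Sum.inr : (Fin d ⊕ Fin d) → Var4 d) (joinMM (a, s)) =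
      jnn yv1 yv2 a s := by
  intro a s
  show Finsupp.mapDomain Sum.inr (Finsupp.mapDomain Sum.inl a + Finsupp.mapDomain Sum.inr s) = _
  rw [Finsupp.mapDomain_add, ← Finsupp.mapDomain_comp, ← Finsupp.mapDomain_comp]
  rfl

lemma HJ2 : ∀ a s : Fin d →₀ ℕ,
    Finsupp.mapDomain (Sum.inr : (Fin d ⊕ Fin d) → Var4 d) (joinMM (s, a)) =
      jnn yv2 yv1 a s := by
  intro a s
  show Finsupp.mapDomain Sum.inr (Finsupp.mapDomain Sum.inl s + Finsupp.mapDomain Sum.inr a) = _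
  rw [Finsupp.mapDomain_add, ← Finsupp.mapDomain_comp, ← Finsupp.mapDomain_comp]
  show Finsupp.mapDomain yv1 s + Finsupp.mapDomain yv2 a = _
  rw [jnn, add_comm]

lemma Happa1 : ∀ (a s : Fin d →₀ ℕ) (q : Fin d), jnn yv1 yv2 a s (yv1 q) = a q := by
  intro a s q
  rw [jnn, Finsupp.add_apply, Finsupp.mapDomain_apply yv1_inj,
    Finsupp.mapDomain_notin_range _ _ (yv1_notin_yv2 q), add_zero]

lemma Happs1 : ∀ (a s : Fin d →₀ ℕ) (q : Fin d), jnn yv1 yv2 a s (yv2 q) = s q := by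
  intro a s q
  rw [jnn, Finsupp.add_apply, Finsupp.mapDomain_apply yv2_inj,
    Finsupp.mapDomain_notin_range _ _ (yv2_notin_yv1 q), zero_add]

lemma Happa2 : ∀ (a s : Fin d →₀ ℕ) (q : Fin d), jnn yv2 yv1 a s (yv2 q) = a q := by
  intro a s q
  rw [jnn, Finsupp.add_apply, Finsupp.mapDomain_apply yv2_inj,
    Finsupp.mapDomain_notin_range _ _ (yv2_notin_yv1 q), add_zero]

lemma Happs2 : ∀ (a s : Fin d →₀ ℕ) (q : Fin d), jnn yv2 yv1 a s (yv1 q) = s q := by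
  intro a s q
  rw [jnn, Finsupp.add_apply, Finsupp.mapDomain_apply yv1_inj,
    Finsupp.mapDomain_notin_range _ _ (yv1_notin_yv2 q), zero_add]

lemma Hrec1 : ∀ N : Var4 d →₀ ℕ, (∀ v, N (Sum.inl v) = 0) →
    ∃ a s, N = jnn yv1 yv2 a s := by
  intro N h0
  refine ⟨Finsupp.equivFunOnFinite.symm fun i => N (yv1 i),
    Finsupp.equivFunOnFinite.symm fun i => N (yv2 i), ?_⟩
  ext v
  rw [jnn, Finsupp.add_apply]
  rcases v with v | w
  · have r1 : Sum.inl v ∉ Set.range (yv1 (d := d)) := by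
      rintro ⟨u, hu⟩; simp [yv1] at hu
    have r2 : Sum.inl v ∉ Set.range (yv2 (d := d)) := by
      rintro ⟨u, hu⟩; simp [yv2] at hu
    rw [h0 v, Finsupp.mapDomain_notin_range _ _ r1, Finsupp.mapDomain_notin_range _ _ r2]
    rfl
  · rcases w with q | q
    · show N (yv1 q) =
        Finsupp.mapDomain yv1 (Finsupp.equivFunOnFinite.symm fun i => N (yv1 i)) (yv1 q) +
        Finsupp.mapDomain yv2 (Finsupp.equivFunOnFinite.symm fun i => N (yv2 i)) (yv1 q)
      rw [Finsupp.mapDomain_apply yv1_inj,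
        Finsupp.mapDomain_notin_range _ _ (yv1_notin_yv2 q), add_zero,
        Finsupp.equivFunOnFinite_symm_apply_apply]
    · show N (yv2 q) =
        Finsupp.mapDomain yv1 (Finsupp.equivFunOnFinite.symm fun i => N (yv1 i)) (yv2 q) +
        Finsupp.mapDomain yv2 (Finsupp.equivFunOnFinite.symm fun i => N (yv2 i)) (yv2 q)
      rw [Finsupp.mapDomain_apply yv2_inj,
        Finsupp.mapDomain_notin_range _ _ (yv2_notin_yv1 q), zero_add,
        Finsupp.equivFunOnFinite_symm_apply_apply]

lemma Hrec2 : ∀ N : Var4 d →₀ ℕ, (∀ v, N (Sum.inl v) = 0) →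
    ∃ a s, N = jnn yv2 yv1 a s := by
  intro N h0
  obtain ⟨a, s, h⟩ := Hrec1 N h0
  exact ⟨s, a, by rw [h, jnn, jnn, add_comm]⟩

lemma Hyx1 : ∀ (k : Fin d) (v : Fin d ⊕ Fin d), yv1 k ≠ Sum.inl v := by
  intro k v h
  simp [yv1] at h

lemma Hyx2 : ∀ (k : Fin d) (v : Fin d ⊕ Fin d), yv2 k ≠ Sum.inl v := by
  intro k v h
  simp [yv2] at h

end inst

end Aux

theorem statement_12
    (K : Type*) [Field K] [Algebra ℂ K]
    (d : ℕ)
    (g : Type*) [LieRing g] [LieAlgebra K g]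
    (b : Module.Basis (Fin d) K g) (c : Fin d → Fin d → Fin d → K)
    (hc : ∀ i j, ⁅b i, b j⁆ = ∑ k, c i j k • b k)
    -- the set of points of `C⁺_{2,0}` (its open part, `ℍ ∖ {i}`)
    (Conf20 : Set ℂ)
    (hConf : Conf20 = {z : ℂ | 0 < z.im ∧ z ≠ Complex.I})
    -- the `1`-forms `Ω₁^π`, `Ω₂^π` of Theorem 2, in coordinates
    (Ω₁ Ω₂ : ℂ → ℂ → (Fin d → ((Fin d →₀ ℕ) × (Fin d →₀ ℕ)) → K))
    -- the Alekseev–Torossian connection `(ω₁, ω₂)`, a `1`-form on `C⁺_{2,0}` with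
    -- values in `tder₂` (pairs of formal Lie series in `(y₁,y₂)`, in coordinates)
    (ω₁ ω₂ : ℂ → ℂ → (Fin d → MvPowerSeries (Fin d ⊕ Fin d) K))
    -- statement 11: the symbols of `Ω₁^π, Ω₂^π` are given by `(ω₁, ω₂)`
    (hsymb₁ : ∀ p ∈ Conf20, ∀ (v : ℂ) (i : Fin d) (mm : (Fin d →₀ ℕ) × (Fin d →₀ ℕ)),
      Ω₁ p v i mm = MvPowerSeries.coeff (joinMM mm) (ω₁ p v i))
    (hsymb₂ : ∀ p ∈ Conf20, ∀ (v : ℂ) (i : Fin d) (mm : (Fin d →₀ ℕ) × (Fin d →₀ ℕ)),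
      Ω₂ p v i mm = MvPowerSeries.coeff (joinMM mm) (ω₂ p v i)) :
    ∀ p ∈ Conf20, ∀ (v : ℂ) (M : Var4 d →₀ ℕ),
      -- `Ω₁^π([π,e^{y₁}], e^{y₂}) = ⟨[y₁,ω₁],∂_{y₁}⟩(e^{y₁}) ⊗ e^{y₂}
      --                            + tr_g(ad(y₁)∂_{y₁}ω₁) e^{y₁} ⊗ e^{y₂}`
      ((∑ᶠ mm : (Fin d →₀ ℕ) × (Fin d →₀ ℕ), ∑ i : Fin d,
        Ω₁ p v i mm *
          MvPowerSeries.coeff M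
            ((∑ j, ∑ k, c j i k •
              (MvPowerSeries.X (yv1 j) *
                (MvPowerSeries.X (xv1 k) * Ymon1 mm.1 +
                  ((mm.1 k : ℕ) : K) • Ymon1 (mm.1 - Finsupp.single k 1)))) *
              Ymon2 mm.2 * EE K d))
      =
      MvPowerSeries.coeff M
        (((∑ q, MvPowerSeries.X (xv1 q) *
            (∑ i, ∑ j, c i j q • (MvPowerSeries.X (yv1 i) * embY (ω₁ p v j))))
          +
          (∑ a, ∑ e, (∑ i, c i e a • MvPowerSeries.X (yv1 i)) *
            pdBig (yv1 a) (embY (ω₁ p v e))))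
          * EE K d))
      ∧
      -- `Ω₂^π(e^{y₁}, [π,e^{y₂}]) = e^{y₁} ⊗ ⟨[y₂,ω₂],∂_{y₂}⟩(e^{y₂})
      --                            + tr_g(ad(y₂)∂_{y₂}ω₂) e^{y₁} ⊗ e^{y₂}`
      ((∑ᶠ mm : (Fin d →₀ ℕ) × (Fin d →₀ ℕ), ∑ i : Fin d,
        Ω₂ p v i mm *
          MvPowerSeries.coeff M
            (Ymon1 mm.1 *
              (∑ j, ∑ k, c j i k •
                (MvPowerSeries.X (yv2 j) *
                  (MvPowerSeries.X (xv2 k) * Ymon2 mm.2 +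
                    ((mm.2 k : ℕ) : K) • Ymon2 (mm.2 - Finsupp.single k 1)))) * EE K d))
      =
      MvPowerSeries.coeff M
        (((∑ q, MvPowerSeries.X (xv2 q) *
            (∑ i, ∑ j, c i j q • (MvPowerSeries.X (yv2 i) * embY (ω₂ p v j))))
          +
          (∑ a, ∑ e, (∑ i, c i e a • MvPowerSeries.X (yv2 i)) *
            pdBig (yv2 a) (embY (ω₂ p v e))))
          * EE K d)) := by
  intro p hp v M
  constructor
  · simp only [hsymb₁ p hp v]
    exact core_thm c (ω₁ p v) xv1 yv1 yv2 Prod.mk HJ1 Happa1 Happs1 Hrec1 Hyx1 (EE K d) M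
  · simp only [hsymb₂ p hp v]
    rw [← finsum_comp_equiv (Equiv.prodComm (Fin d →₀ ℕ) (Fin d →₀ ℕ))]
    refine Eq.trans (finsum_congr fun ms => Finset.sum_congr rfl fun i _ => ?_)
      (core_thm c (ω₂ p v) xv2 yv2 yv1 (fun a s => (s, a)) HJ2 Happa2 Happs2 Hrec2 Hyx2
        (EE K d) M)
    simp only [Equiv.prodComm_apply, Prod.fst_swap, Prod.snd_swap]
    rw [mul_comm (Ymon1 ms.2)]
    rfl
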